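/- Let n ≥ 3 be odd and let μ ∈ ℝ satisfy a_{(n−1)/2}(μ) + a_{(n−3)/2}(μ) = 0. Then a_{n−1}(μ) = 0 and a_{n−2}(μ) = −1. -/
import Mathlib


noncomputable def a (μ : ℝ) : ℕ → ℝ
  | 0 => 1
  | 1 => 2 * (1 - μ)
  | n + 2 => 2 * (1 - μ) * a μ (n + 1) - a μ n

lemma a_add (μ : ℝ) (q : ℕ) : ∀ p : ℕ,
    a μ (p + q + 2) = a μ (p + 1) * a μ (q + 1) - a μ p * a μ q := by
  intro p
  induction p using Nat.twoStepInduction with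
  | zero => simp [a]
  | one =>
    rw [show 1 + q + 2 = (q + 1) + 2 by ring]
    simp [a]; ring
  | more p ih1 ih2 =>
    have ih2' := ih2
    rw [show p + 1 + q + 2 = p + q + 3 by ring, show p + 1 + 1 = p + 2 by ring] at ih2'
    have e : a μ (p + q + 4) = 2*(1-μ) * a μ (p+q+3) - a μ (p+q+2) := rfl
    have e2 : a μ (p + 3) = 2*(1-μ) * a μ (p+2) - a μ (p+1) := rfl
    have e3 : a μ (p + 2) = 2*(1-μ) * a μ (p+1) - a μ p := rfl
    rw [show p + 2 + q + 2 = p + q + 4 by ring, show p + 2 + 1 = p + 3 by ring]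
    linear_combination e + 2*(1-μ)*ih2' - ih1 - a μ (q+1) * e2 + a μ q * e3

lemma a_cassini (μ : ℝ) : ∀ k : ℕ, a μ (k + 2) * a μ k - a μ (k + 1) ^ 2 = -1 := by
  intro k
  induction k with
  | zero => simp [a]; ring
  | succ k ih =>
    have h1 : a μ (k + 3) = 2*(1-μ) * a μ (k+2) - a μ (k+1) := rfl
    have h2 : a μ (k + 2) = 2*(1-μ) * a μ (k+1) - a μ k := rfl
    show a μ (k+3) * a μ (k+1) - a μ (k+2)^2 = -1
    linear_combination a μ (k+1) * h1 - a μ (k+2) * h2 + ih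

theorem stmt11 (n : ℕ) (hn : 3 ≤ n) (hodd : Odd n) (μ : ℝ)
    (h : a μ ((n - 1) / 2) + a μ ((n - 3) / 2) = 0) :
    a μ (n - 1) = 0 ∧ a μ (n - 2) = -1 := by
  obtain ⟨k, hk⟩ := hodd
  obtain ⟨m, rfl⟩ : ∃ m, k = m + 1 := ⟨k - 1, by omega⟩
  have e1 : n - 1 = 2 * m + 2 := by omega
  have e2 : n - 2 = 2 * m + 1 := by omega
  have e3 : (n - 1) / 2 = m + 1 := by omega
  have e4 : (n - 3) / 2 = m := by omega
  rw [e3, e4] at h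
  have hm : a μ (m + 1) = - a μ m := by linarith
  rw [e1, e2]
  constructor
  · have hadd := a_add μ m m
    rw [show m + m + 2 = 2 * m + 2 by ring] at hadd
    rw [hadd, hm]; ring
  · rcases m with _ | m'
    · have h0 : a μ 0 = 1 := rfl
      have h1 : a μ 1 = 2 * (1 - μ) := rfl
      show a μ 1 = -1
      rw [h1]; rw [h1, h0] at h; linarith
    · have hadd := a_add μ m' (m' + 1)
      rw [show m' + 1 + m' + 2 = 2 * (m' + 1) + 1 by ring] at hadd
      have hcas := a_cassini μ m'
      rw [hadd]
      show a μ (m'+2) * a μ (m'+1) - a μ (m'+1) * a μ m' = -1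
      linear_combination hcas + (a μ (m'+1) - a μ m') * hm
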